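/- Counterexample showing the risk-sensitive Bellman optimality operator is not a contraction for CVaR: there exists a 3-state deterministic-transition MDP with binary actions, reward distributions as specified, and value distributions Z₁ = Z₂ (so ‖β[Z₁]−β[Z₂]‖_∞ = 0), such that two valid one-step applications of the risk-sensitive Bellman optimality operator T*_β with β = CVaR_{0.1} (each using a different maximizer when the argmax over β-values is non-unique) produce Z₁′, Z₂′ with ‖β[Z₁′]−β[Z₂′]‖_∞ = 99 > 0. Hence T*_β admits no Lipschitz contraction bound in the sup-metric on β-values. -/

import Mathlib

open MeasureTheory

/-- Quantile function of a distribution `μ` on ℝ. -/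
noncomputable def qf (μ : Measure ℝ) (τ : ℝ) : ℝ :=
  sInf {x : ℝ | τ ≤ (μ (Set.Iic x)).toReal}

/-- Lower-tail conditional value-at-risk `CVaR_η[X] = (1/η) ∫₀^η F_X^{-1}`. -/
noncomputable def cvar (η : ℝ) (μ : Measure ℝ) : ℝ :=
  (1 / η) * ∫ τ in Set.Ioo (0:ℝ) η, qf μ τ


noncomputable def νm : Measure ℝ :=
  (9/10 : ENNReal) • Measure.dirac 100 + (1/10 : ENNReal) • Measure.dirac (-10)

noncomputable def Z1 : Measure ℝ :=
  Measure.map (fun q : ℝ × ℝ => q.1 + q.2) (νm.prod νm)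

noncomputable def Z2 : Measure ℝ :=
  Measure.map (fun q : ℝ × ℝ => q.1 + q.2) (νm.prod (Measure.dirac (-10)))

instance : SFinite νm := by unfold νm; infer_instance

lemma qf_eq (μ : Measure ℝ) {τ m : ℝ} (h : ∀ x : ℝ, τ ≤ (μ (Set.Iic x)).toReal ↔ m ≤ x) :
    qf μ τ = m := by
  unfold qf
  rw [show {x : ℝ | τ ≤ (μ (Set.Iic x)).toReal} = Set.Ici m from Set.ext h]
  exact csInf_Ici

lemma F_ν_E (x : ℝ) : νm (Set.Iic x)
    = if (100:ℝ) ≤ x then 1 else if (-10:ℝ) ≤ x then 1/10 else 0 := by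
  rw [νm, Measure.add_apply, Measure.smul_apply, Measure.smul_apply,
    Measure.dirac_apply' _ measurableSet_Iic, Measure.dirac_apply' _ measurableSet_Iic]
  by_cases h1 : (100:ℝ) ≤ x <;> by_cases h2 : (-10:ℝ) ≤ x <;>
    simp only [Set.indicator, Set.mem_Iic, h1, h2, if_true, if_false, Pi.one_apply,
      smul_eq_mul, mul_one, mul_zero, add_zero, zero_add] <;>
    first
    | linarith
    | (rw [ENNReal.div_add_div_same, show (9+1:ENNReal) = 10 from by norm_num,
        ENNReal.div_self (by norm_num) (by norm_num)])

lemma F_δ_E (x : ℝ) : Measure.dirac (-10 : ℝ) (Set.Iic x)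
    = if (-10:ℝ) ≤ x then 1 else 0 := by
  rw [Measure.dirac_apply' _ measurableSet_Iic]
  by_cases h : (-10:ℝ) ≤ x <;> simp [Set.indicator, Set.mem_Iic, h]

lemma hadd_meas : Measurable (fun q : ℝ × ℝ => q.1 + q.2) :=
  measurable_fst.add measurable_snd

lemma map_add_prod_apply (ν : Measure ℝ) [SFinite ν] (x : ℝ) :
    Measure.map (fun q : ℝ × ℝ => q.1 + q.2) (νm.prod ν) (Set.Iic x)
      = 9/10 * ν (Set.Iic (x - 100)) + 1/10 * ν (Set.Iic (x + 10)) := by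
  rw [Measure.map_apply hadd_meas measurableSet_Iic,
    Measure.prod_apply (hadd_meas measurableSet_Iic)]
  have hset : ∀ a : ℝ, (Prod.mk a ⁻¹' ((fun q : ℝ × ℝ => q.1 + q.2) ⁻¹' Set.Iic x))
      = Set.Iic (x - a) := by
    intro a; ext b
    simp only [Set.mem_preimage, Set.mem_Iic]
    constructor <;> intro <;> linarith
  simp_rw [hset]
  rw [νm, lintegral_add_measure, lintegral_smul_measure, lintegral_smul_measure,
    lintegral_dirac, lintegral_dirac]
  norm_num

lemma F_Z2 (x : ℝ) : ((Z2 (Set.Iic x)).toReal)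
    = if (90:ℝ) ≤ x then 1 else if (-20:ℝ) ≤ x then 1/10 else 0 := by
  rw [Z2, map_add_prod_apply, F_δ_E, F_δ_E]
  by_cases h1 : (90:ℝ) ≤ x <;> by_cases h2 : (-20:ℝ) ≤ x
  · rw [if_pos (show (-10:ℝ) ≤ x - 100 by linarith),
      if_pos (show (-10:ℝ) ≤ x + 10 by linarith), if_pos h1, mul_one, mul_one,
      ENNReal.div_add_div_same, show (9+1:ENNReal) = 10 from by norm_num,
      ENNReal.div_self (by norm_num) (by norm_num)]
    exact ENNReal.toReal_one
  · exact absurd (by linarith : (-20:ℝ) ≤ x) h2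
  · rw [if_neg (show ¬ (-10:ℝ) ≤ x - 100 by intro h; exact h1 (by linarith)),
      if_pos (show (-10:ℝ) ≤ x + 10 by linarith), if_neg h1, if_pos h2,
      mul_zero, zero_add, mul_one, ENNReal.toReal_div]
    norm_num
  · rw [if_neg (show ¬ (-10:ℝ) ≤ x - 100 by intro h; exact h1 (by linarith)),
      if_neg (show ¬ (-10:ℝ) ≤ x + 10 by intro h; exact h2 (by linarith)),
      if_neg h1, if_neg h2, mul_zero, mul_zero, add_zero]
    exact ENNReal.toReal_zero

lemma F_Z1 (x : ℝ) : ((Z1 (Set.Iic x)).toReal)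
    = if (200:ℝ) ≤ x then 1 else if (90:ℝ) ≤ x then 19/100
      else if (-20:ℝ) ≤ x then 1/100 else 0 := by
  rw [Z1, map_add_prod_apply, F_ν_E, F_ν_E]
  by_cases h1 : (200:ℝ) ≤ x <;> by_cases h2 : (90:ℝ) ≤ x <;> by_cases h3 : (-20:ℝ) ≤ x
  · rw [if_pos (show (100:ℝ) ≤ x - 100 by linarith),
      if_pos (show (100:ℝ) ≤ x + 10 by linarith), if_pos h1, mul_one, mul_one,
      ENNReal.div_add_div_same, show (9+1:ENNReal) = 10 from by norm_num,
      ENNReal.div_self (by norm_num) (by norm_num)]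
    exact ENNReal.toReal_one
  · exact absurd (by linarith : (-20:ℝ) ≤ x) h3
  · exact absurd (by linarith : (90:ℝ) ≤ x) h2
  · exact absurd (by linarith : (90:ℝ) ≤ x) h2
  · rw [if_neg (show ¬ (100:ℝ) ≤ x - 100 by intro h; exact h1 (by linarith)),
      if_pos (show (-10:ℝ) ≤ x - 100 by linarith),
      if_pos (show (100:ℝ) ≤ x + 10 by linarith), if_neg h1, if_pos h2, mul_one,
      ENNReal.toReal_add (ENNReal.mul_ne_top (by simp [ENNReal.div_eq_top])
        (by simp [ENNReal.div_eq_top])) (by simp [ENNReal.div_eq_top]),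
      ENNReal.toReal_mul, ENNReal.toReal_div, ENNReal.toReal_div]
    norm_num [ENNReal.toReal_ofNat]
  · exact absurd (by linarith : (-20:ℝ) ≤ x) h3
  · rw [if_neg (show ¬ (100:ℝ) ≤ x - 100 by intro h; exact h1 (by linarith)),
      if_neg (show ¬ (-10:ℝ) ≤ x - 100 by intro h; exact h2 (by linarith)),
      if_neg (show ¬ (100:ℝ) ≤ x + 10 by intro h; exact h2 (by linarith)),
      if_pos (show (-10:ℝ) ≤ x + 10 by linarith), if_neg h1, if_neg h2, if_pos h3,
      mul_zero, zero_add,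
      ENNReal.toReal_mul, ENNReal.toReal_div]
    norm_num [ENNReal.toReal_ofNat]
  · rw [if_neg (show ¬ (100:ℝ) ≤ x - 100 by intro h; exact h1 (by linarith)),
      if_neg (show ¬ (-10:ℝ) ≤ x - 100 by intro h; exact h2 (by linarith)),
      if_neg (show ¬ (100:ℝ) ≤ x + 10 by intro h; exact h2 (by linarith)),
      if_neg (show ¬ (-10:ℝ) ≤ x + 10 by intro h; exact h3 (by linarith)),
      if_neg h1, if_neg h2, if_neg h3, mul_zero, mul_zero, add_zero]
    exact ENNReal.toReal_zero

lemma F_ν (x : ℝ) : ((νm (Set.Iic x)).toReal)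
    = if (100:ℝ) ≤ x then 1 else if (-10:ℝ) ≤ x then 1/10 else 0 := by
  rw [F_ν_E]; split_ifs <;> norm_num [ENNReal.toReal_div, ENNReal.toReal_ofNat]

lemma F_δ (x : ℝ) : ((Measure.dirac (-10:ℝ) (Set.Iic x)).toReal)
    = if (-10:ℝ) ≤ x then 1 else 0 := by
  rw [F_δ_E]; split_ifs <;> norm_num

lemma qf_ν {τ : ℝ} (h0 : 0 < τ) (h1 : τ ≤ 1/10) : qf νm τ = -10 := by
  refine qf_eq _ fun x => ?_
  rw [F_ν]; split_ifs with ha hb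
  · exact ⟨fun _ => by linarith, fun _ => by linarith⟩
  · exact ⟨fun _ => hb, fun _ => h1⟩
  · exact ⟨fun h => by linarith, fun h => absurd h hb⟩

lemma qf_δ {τ : ℝ} (h0 : 0 < τ) (h1 : τ ≤ 1) : qf (Measure.dirac (-10:ℝ)) τ = -10 := by
  refine qf_eq _ fun x => ?_
  rw [F_δ]; split_ifs with ha
  · exact ⟨fun _ => ha, fun _ => h1⟩
  · exact ⟨fun h => by linarith, fun h => absurd h ha⟩

lemma qf_Z2 {τ : ℝ} (h0 : 0 < τ) (h1 : τ ≤ 1/10) : qf Z2 τ = -20 := by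
  refine qf_eq _ fun x => ?_
  rw [F_Z2]; split_ifs with ha hb
  · exact ⟨fun _ => by linarith, fun _ => by linarith⟩
  · exact ⟨fun _ => hb, fun _ => h1⟩
  · exact ⟨fun h => by linarith, fun h => absurd h hb⟩

lemma qf_Z1_low {τ : ℝ} (h0 : 0 < τ) (h1 : τ ≤ 1/100) : qf Z1 τ = -20 := by
  refine qf_eq _ fun x => ?_
  rw [F_Z1]; split_ifs with ha hb hc
  · exact ⟨fun _ => by linarith, fun _ => by linarith⟩
  · exact ⟨fun _ => by linarith, fun _ => by linarith⟩
  · exact ⟨fun _ => hc, fun _ => h1⟩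
  · exact ⟨fun h => by linarith, fun h => absurd h hc⟩

lemma qf_Z1_high {τ : ℝ} (h0 : 1/100 < τ) (h1 : τ ≤ 1/10) : qf Z1 τ = 90 := by
  refine qf_eq _ fun x => ?_
  rw [F_Z1]; split_ifs with ha hb hc
  · exact ⟨fun _ => by linarith, fun _ => by linarith⟩
  · exact ⟨fun _ => hb, fun _ => by linarith⟩
  · exact ⟨fun h => by linarith, fun h => absurd h hb⟩
  · exact ⟨fun h => by linarith, fun h => absurd h hb⟩

lemma cvar_ν : cvar (1/10) νm = -10 := by
  unfold cvar
  rw [setIntegral_congr_fun measurableSet_Ioo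
      (fun τ hτ => qf_ν hτ.1 hτ.2.le : Set.EqOn (qf νm) (fun _ => (-10:ℝ)) _),
    setIntegral_const, measureReal_def, Real.volume_Ioo, smul_eq_mul]
  rw [ENNReal.toReal_ofReal (by norm_num)]
  norm_num

lemma cvar_δ : cvar (1/10) (Measure.dirac (-10:ℝ)) = -10 := by
  unfold cvar
  rw [setIntegral_congr_fun measurableSet_Ioo
      (fun τ hτ => qf_δ hτ.1 (by linarith [hτ.2]) :
        Set.EqOn (qf (Measure.dirac (-10:ℝ))) (fun _ => (-10:ℝ)) _),
    setIntegral_const, measureReal_def, Real.volume_Ioo, smul_eq_mul]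
  rw [ENNReal.toReal_ofReal (by norm_num)]
  norm_num

lemma cvar_Z2 : cvar (1/10) Z2 = -20 := by
  unfold cvar
  rw [setIntegral_congr_fun measurableSet_Ioo
      (fun τ hτ => qf_Z2 hτ.1 hτ.2.le : Set.EqOn (qf Z2) (fun _ => (-20:ℝ)) _),
    setIntegral_const, measureReal_def, Real.volume_Ioo, smul_eq_mul]
  rw [ENNReal.toReal_ofReal (by norm_num)]
  norm_num

lemma cvar_Z1 : cvar (1/10) Z1 = 79 := by
  unfold cvar
  rw [show Set.Ioo (0:ℝ) (1/10) = Set.Ioc 0 (1/100) ∪ Set.Ioo (1/100) (1/10) from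
    (Set.Ioc_union_Ioo_eq_Ioo (by norm_num) (by norm_num)).symm]
  have hdisj : Disjoint (Set.Ioc (0:ℝ) (1/100)) (Set.Ioo (1/100) (1/10)) := by
    rw [Set.disjoint_left]; rintro a ⟨_, h2⟩ ⟨h3, _⟩; linarith
  have heq1 : Set.EqOn (qf Z1) (fun _ => (-20:ℝ)) (Set.Ioc 0 (1/100)) :=
    fun τ hτ => qf_Z1_low hτ.1 hτ.2
  have heq2 : Set.EqOn (qf Z1) (fun _ => (90:ℝ)) (Set.Ioo (1/100) (1/10)) :=
    fun τ hτ => qf_Z1_high hτ.1 hτ.2.le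
  have hint1 : IntegrableOn (qf Z1) (Set.Ioc (0:ℝ) (1/100)) := by
    refine (IntegrableOn.congr_fun ?_ (fun τ hτ => (heq1 hτ).symm) measurableSet_Ioc)
    exact integrableOn_const measure_Ioc_lt_top.ne
  have hint2 : IntegrableOn (qf Z1) (Set.Ioo ((1:ℝ)/100) (1/10)) := by
    refine (IntegrableOn.congr_fun ?_ (fun τ hτ => (heq2 hτ).symm) measurableSet_Ioo)
    exact integrableOn_const measure_Ioo_lt_top.ne
  rw [setIntegral_union hdisj measurableSet_Ioo hint1 hint2,
    setIntegral_congr_fun measurableSet_Ioc heq1,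
    setIntegral_congr_fun measurableSet_Ioo heq2,
    setIntegral_const, setIntegral_const, measureReal_def, measureReal_def, Real.volume_Ioc, Real.volume_Ioo,
    smul_eq_mul, smul_eq_mul, ENNReal.toReal_ofReal (by norm_num),
    ENNReal.toReal_ofReal (by norm_num)]
  norm_num

/-- counterexample showing the risk-sensitive Bellman optimality
operator is not a contraction for β = CVaR₀.₁.  In the 3-state deterministic MDP
(γ = 1): `R(s₀,a₀) = {100 w.p. 0.9; −10 w.p. 0.1}`, and the common value distribution
`Z₁ = Z₂` has `Z(s₁,a₀) = {100 w.p. 0.9; −10 w.p. 0.1}` and `Z(s₁,a₁) = δ_{−10}`.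
Both actions at `s₁` are greedy (`CVaR = −10` each, so `‖β[Z₁]−β[Z₂]‖_∞ = 0` and the
argmax is non-unique); one valid update gives `Z₁'(s₀,a₀) = R(s₀,a₀) + Z(s₁,a₀)`
(the independent sum, via the product measure) with `CVaR = 79`, the other gives
`Z₂'(s₀,a₀) = R(s₀,a₀) + Z(s₁,a₁)` with `CVaR = −20`; hence the β-values after one
application differ by `99 > 0`, refuting any Lipschitz contraction bound. -/
theorem cvar_bellman_optimality_not_contraction :
    let μR : Measure ℝ :=
      (9/10 : ENNReal) • Measure.dirac 100 + (1/10 : ENNReal) • Measure.dirac (-10)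
    let Zs₁a₀ : Measure ℝ :=
      (9/10 : ENNReal) • Measure.dirac 100 + (1/10 : ENNReal) • Measure.dirac (-10)
    let Zs₁a₁ : Measure ℝ := Measure.dirac (-10)
    let Z₁' : Measure ℝ := Measure.map (fun q : ℝ × ℝ => q.1 + q.2) (μR.prod Zs₁a₀)
    let Z₂' : Measure ℝ := Measure.map (fun q : ℝ × ℝ => q.1 + q.2) (μR.prod Zs₁a₁)
    cvar (1/10) Zs₁a₀ = -10 ∧ cvar (1/10) Zs₁a₁ = -10 ∧
    cvar (1/10) Z₁' = 79 ∧ cvar (1/10) Z₂' = -20 ∧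
    |cvar (1/10) Z₁' - cvar (1/10) Z₂'| = 99 ∧ (0:ℝ) < 99 := by
  intro μR Zs₁a₀ Zs₁a₁ Z₁' Z₂'
  exact ⟨cvar_ν, cvar_δ, cvar_Z1, cvar_Z2,
    by show |cvar (1/10) Z1 - cvar (1/10) Z2| = 99; rw [cvar_Z1, cvar_Z2]; norm_num,
    by norm_num⟩
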